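/- With the setup of the coordinate kernels: let n ≥ 2, R ⊆ Π Aᵢ subdirect with the parallelogram property, and θᵢ the coordinate kernel at i. Then R is saturated with respect to the θᵢ: if r ∈ R and s ∈ Π Aᵢ satisfy (rᵢ, sᵢ) ∈ θᵢ for every i, then s ∈ R. Equivalently, R equals the preimage of its image under the product quotient map ψ : Π Aᵢ → Π (Aᵢ/θᵢ). -/

import Mathlib

/-- The parallelogram property for a relation `R ⊆ Π i, A i`. -/
def Parallelogram {n : ℕ} {A : Fin n → Type*} (R : Set (∀ i, A i)) : Prop :=
  ∀ S : Set (Fin n), S.Nonempty → Sᶜ.Nonempty →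
    ∀ p q r s : ∀ i, A i, p ∈ R → q ∈ R → r ∈ R →
      (∀ i ∈ S, p i = q i) → (∀ i ∈ S, r i = s i) →
      (∀ i ∉ S, q i = r i) → (∀ i ∉ S, p i = s i) → s ∈ R

/-- The coordinate kernel of `R` at coordinate `i`. -/
def CoordKernel {n : ℕ} {A : Fin n → Type*} (R : Set (∀ i, A i)) (i : Fin n)
    (a b : A i) : Prop :=
  ∃ p q : ∀ j, A j, p ∈ R ∧ q ∈ R ∧ p i = a ∧ q i = b ∧ ∀ j ≠ i, p j = q j

lemma step_lemma {n : ℕ} (hn : 2 ≤ n) {A : Fin n → Type*} (R : Set (∀ i, A i))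
    (hpar : Parallelogram R) (t : ∀ i, A i) (ht : t ∈ R) (i : Fin n) (b : A i)
    (hk : CoordKernel R i (t i) b) : Function.update t i b ∈ R := by
  obtain ⟨p, q, hp, hq, hpi, hqi, hoff⟩ := hk
  haveI : Nontrivial (Fin n) := Fin.nontrivial_iff_two_le.mpr hn
  obtain ⟨j, hj⟩ := exists_ne i
  have hmem : ∀ k : Fin n, k ∉ ({i}ᶜ : Set (Fin n)) → k = i := by
    intro k hk'; by_contra h; exact hk' h
  refine hpar ({i}ᶜ : Set (Fin n)) ⟨j, hj⟩ ⟨i, by simp⟩ q p t (Function.update t i b)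
    hq hp ht ?_ ?_ ?_ ?_
  · intro k hk'; exact (hoff k hk').symm
  · intro k hk'
    have hne : k ≠ i := hk'
    simp [Function.update, dif_neg hne]
  · intro k hk'; rw [hmem k hk']; exact hpi
  · intro k hk'; rw [hmem k hk']; simpa using hqi

theorem stmt12 {n : ℕ} (hn : 2 ≤ n) {A : Fin n → Type*} (R : Set (∀ i, A i))
    (hsd : ∀ i : Fin n, ∀ a : A i, ∃ r ∈ R, r i = a)
    (hpar : Parallelogram R) (r s : ∀ i, A i) (hr : r ∈ R)
    (hθ : ∀ i : Fin n, CoordKernel R i (r i) (s i)) : s ∈ R := by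
  set t : ℕ → ∀ i, A i := fun k j => if (j : ℕ) < k then s j else r j with ht
  have key : ∀ k, k ≤ n → t k ∈ R := by
    intro k
    induction k with
    | zero =>
      intro _
      have : t 0 = r := by funext j; simp [ht]
      rwa [this]
    | succ k ih =>
      intro hk
      have hk' : k < n := hk
      have hmem := ih (le_of_lt hk')
      set i : Fin n := ⟨k, hk'⟩ with hi
      have hti : t k i = r i := by simp [ht, hi]
      have hker : CoordKernel R i (t k i) (s i) := by rw [hti]; exact hθ i
      have hstep := step_lemma hn R hpar (t k) hmem i (s i) hker
      have heq : t (k + 1) = Function.update (t k) i (s i) := by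
        funext j
        rcases eq_or_ne j i with h | h
        · subst h; simp [ht, hi]
        · have hne : (j : ℕ) ≠ k := fun hc => h (Fin.ext hc)
          have : (j : ℕ) < k + 1 ↔ (j : ℕ) < k := by omega
          simp [ht, Function.update, h, this]
      rwa [heq]
  have : t n = s := by
    funext j; simp [ht, j.isLt]
  rw [← this]; exact key n le_rfl
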